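/- For each real E ≤ E₀ there exists a unique real J ≤ 0 such that (1/2)∫_{ρ₋}^{ρ₊} dr/(E·χ(r) − J) = 1 (in particular E·χ(r) − J > 0 for all r ∈ [ρ₋,ρ₊]). -/

import Mathlib

open Real MeasureTheory Set Filter Topology Function
noncomputable section

def chi (a : ℝ) : ℝ := a * (1 - a)

lemma aux_log_int (A c δ : ℝ) (hA : 0 < A) (hc : 0 < c) (hδ : 0 ≤ δ) :
    ∫ t in (0:ℝ)..δ, (A + c * t)⁻¹ = c⁻¹ * (Real.log (A + c * δ) - Real.log A) := by
  have hpos : ∀ t ∈ Set.uIcc (0:ℝ) δ, 0 < A + c * t := by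
    intro t ht
    rw [Set.uIcc_of_le hδ] at ht
    nlinarith [ht.1]
  have hderiv : ∀ t ∈ Set.uIcc (0:ℝ) δ,
      HasDerivAt (fun t => c⁻¹ * Real.log (A + c * t)) ((A + c * t)⁻¹) t := by
    intro t ht
    have h1 : HasDerivAt (fun t : ℝ => A + c * t) c t := by
      simpa using ((hasDerivAt_id t).const_mul c).const_add A
    have h3 := (h1.log (hpos t ht).ne').const_mul c⁻¹
    refine h3.congr_deriv ?_
    field_simp
  have hint : IntervalIntegrable (fun t => (A + c * t)⁻¹) volume 0 δ := by
    apply ContinuousOn.intervalIntegrable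
    exact (continuousOn_const.add (continuousOn_const.mul continuousOn_id)).inv₀
      fun t ht => (hpos t ht).ne'
  rw [intervalIntegral.integral_eq_sub_of_hasDerivAt hderiv hint]
  rw [mul_zero, add_zero, mul_sub]

lemma aux_chi_int (E ρm ρp : ℝ) (hE : 0 < E) (h0 : 0 < ρm) (h1 : ρm ≤ ρp) (h2 : ρp < 1) :
    ∫ r in ρm..ρp, (E * chi r)⁻¹
      = E⁻¹ * ((Real.log ρp - Real.log (1 - ρp)) - (Real.log ρm - Real.log (1 - ρm))) := by
  have hmem : ∀ r ∈ Set.uIcc ρm ρp, 0 < r ∧ r < 1 := by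
    intro r hr; rw [Set.uIcc_of_le h1] at hr
    exact ⟨lt_of_lt_of_le h0 hr.1, lt_of_le_of_lt hr.2 h2⟩
  have hderiv : ∀ r ∈ Set.uIcc ρm ρp,
      HasDerivAt (fun r => E⁻¹ * (Real.log r - Real.log (1 - r))) ((E * chi r)⁻¹) r := by
    intro r hr
    obtain ⟨hr0, hr1⟩ := hmem r hr
    have hlog1 : HasDerivAt Real.log r⁻¹ r := Real.hasDerivAt_log hr0.ne'
    have hsub : HasDerivAt (fun r : ℝ => 1 - r) (-1) r := by
      simpa using (hasDerivAt_id r).const_sub 1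
    have hlog2 : HasDerivAt (fun r => Real.log (1 - r)) (-1 / (1 - r)) r :=
      hsub.log (by linarith)
    have h := (hlog1.sub hlog2).const_mul E⁻¹
    refine h.congr_deriv ?_
    have h1r : (1:ℝ) - r ≠ 0 := by intro h; linarith
    unfold chi
    field_simp
    ring
  have hint : IntervalIntegrable (fun r => (E * chi r)⁻¹) volume ρm ρp := by
    apply ContinuousOn.intervalIntegrable
    apply ContinuousOn.inv₀
    · have : Continuous (fun r : ℝ => E * chi r) := by
        unfold chi
        exact continuous_const.mul (continuous_id.mul (continuous_const.sub continuous_id))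
      exact this.continuousOn
    · intro r hr
      obtain ⟨hr0, hr1⟩ := hmem r hr
      have : 0 < chi r := by unfold chi; nlinarith
      positivity
  rw [intervalIntegral.integral_eq_sub_of_hasDerivAt hderiv hint]
  ring

set_option maxHeartbeats 2000000 in
theorem stmt0 (ρm ρp φm φp E0 : ℝ)
    (h0 : 0 < ρm) (h1 : ρm < ρp) (h2 : ρp < 1)
    (hφm : φm = Real.log (ρm / (1 - ρm))) (hφp : φp = Real.log (ρp / (1 - ρp)))
    (hE0 : E0 = (φp - φm) / 2) (E : ℝ) (hE : E ≤ E0) :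
    ∃ J : ℝ, (J ≤ 0 ∧ (1/2) * (∫ r in ρm..ρp, (E * chi r - J)⁻¹) = 1) ∧
      (∀ r ∈ Set.Icc ρm ρp, 0 < E * chi r - J) ∧
      (∀ J' : ℝ, J' ≤ 0 → (1/2) * (∫ r in ρm..ρp, (E * chi r - J')⁻¹) = 1 → J' = J) := by
  -- basic facts
  have hchi_pos : ∀ r ∈ Set.Icc ρm ρp, 0 < chi r := by
    intro r hr; unfold chi; nlinarith [hr.1, hr.2]
  obtain ⟨ts, hts_def⟩ : ∃ x : ℝ, x = max ρm (min ρp (1/2)) := ⟨_, rfl⟩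
  have hts_mem : ts ∈ Set.Icc ρm ρp := by
    rw [hts_def]
    constructor
    · exact le_max_left _ _
    · exact max_le h1.le (min_le_left _ _)
  have hchi_ts : ∀ r ∈ Set.Icc ρm ρp, chi r ≤ chi ts := by
    intro r hr
    obtain ⟨hr1, hr2⟩ := hr
    rcases le_total (1/2 : ℝ) ρm with h | h
    · have hts : ts = ρm := by
        rw [hts_def, min_eq_right (h.trans h1.le), max_eq_left h]
      rw [hts]; unfold chi; nlinarith
    · rcases le_total ρp (1/2 : ℝ) with h' | h'
      · have hts : ts = ρp := by
          rw [hts_def, min_eq_left h', max_eq_right h1.le]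
        rw [hts]; unfold chi; nlinarith
      · have hts : ts = 1/2 := by
          rw [hts_def, min_eq_right h', max_eq_right h]
        rw [hts]; unfold chi; nlinarith [sq_nonneg (r - 1/2)]
  have hchi_min : ∀ r ∈ Set.Icc ρm ρp, min (chi ρm) (chi ρp) ≤ chi r := by
    intro r hr
    obtain ⟨hr1, hr2⟩ := hr
    rcases le_total (1 - r - ρm) 0 with h | h
    · refine le_trans (min_le_right _ _) ?_
      unfold chi; nlinarith
    · refine le_trans (min_le_left _ _) ?_
      unfold chi; nlinarith
  obtain ⟨mg, hmg_def⟩ : ∃ x : ℝ, x = min (E * chi ρm) (min (E * chi ρp) (E * chi ts)) := ⟨_, rfl⟩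
  have hmg : ∀ r ∈ Set.Icc ρm ρp, mg ≤ E * chi r := by
    intro r hr
    rw [hmg_def]
    rcases le_or_gt 0 E with hEnn | hEneg
    · have := hchi_min r hr
      rcases le_total (chi ρm) (chi ρp) with h | h
      · rw [min_eq_left h] at this
        exact le_trans (min_le_left _ _) (mul_le_mul_of_nonneg_left this hEnn)
      · rw [min_eq_right h] at this
        exact le_trans (le_trans (min_le_right _ _) (min_le_left _ _))
          (mul_le_mul_of_nonneg_left this hEnn)
    · exact le_trans (le_trans (min_le_right _ _) (min_le_right _ _))
        (mul_le_mul_of_nonpos_left (hchi_ts r hr) hEneg.le)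
  have hpos : ∀ J, J < mg → ∀ r ∈ Set.Icc ρm ρp, 0 < E * chi r - J := by
    intro J hJ r hr
    have := hmg r hr
    linarith
  have hcont0 : Continuous (fun r : ℝ => E * chi r) := by
    unfold chi; exact continuous_const.mul (continuous_id.mul (continuous_const.sub continuous_id))
  have hcont : ∀ J, J < mg → ContinuousOn (fun r => (E * chi r - J)⁻¹) (Set.Icc ρm ρp) := by
    intro J hJ
    exact ((hcont0.sub continuous_const).continuousOn).inv₀ fun r hr => (hpos J hJ r hr).ne'
  have hint : ∀ J, J < mg → IntervalIntegrable (fun r => (E * chi r - J)⁻¹) volume ρm ρp := by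
    intro J hJ
    apply ContinuousOn.intervalIntegrable
    rw [Set.uIcc_of_le h1.le]
    exact hcont J hJ
  obtain ⟨F, hF_def⟩ : ∃ x : ℝ → ℝ, x = fun J => (1/2) * (∫ r in ρm..ρp, (E * chi r - J)⁻¹) := ⟨_, rfl⟩
  have hmono : ∀ J1 J2, J1 < J2 → J2 < mg → F J1 < F J2 := by
    intro J1 J2 h12 h2m
    have h1m : J1 < mg := h12.trans h2m
    have hdiffpos : 0 < ∫ r in ρm..ρp, ((E * chi r - J2)⁻¹ - (E * chi r - J1)⁻¹) := by
      apply intervalIntegral.intervalIntegral_pos_of_pos_on ((hint J2 h2m).sub (hint J1 h1m))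
      · intro x hx
        have hx' : x ∈ Set.Icc ρm ρp := Set.Ioo_subset_Icc_self hx
        have p1 := hpos J1 h1m x hx'
        have p2 := hpos J2 h2m x hx'
        have : (E * chi x - J1)⁻¹ < (E * chi x - J2)⁻¹ := inv_strictAnti₀ p2 (by linarith)
        linarith
      · exact h1
    have heq := intervalIntegral.integral_sub (hint J2 h2m) (hint J1 h1m)
    simp only [hF_def]
    rw [heq] at hdiffpos
    linarith
  have hFle : ∀ J, J < mg → F J ≤ (1/2) * ((ρp - ρm) * (mg - J)⁻¹) := by
    intro J hJ
    have hle : (∫ r in ρm..ρp, (E * chi r - J)⁻¹) ≤ ∫ _r in ρm..ρp, (mg - J)⁻¹ := by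
      apply intervalIntegral.integral_mono_on h1.le (hint J hJ) intervalIntegrable_const
      intro x hx
      exact inv_anti₀ (by linarith) (by linarith [hmg x hx])
    rw [intervalIntegral.integral_const, smul_eq_mul] at hle
    simp only [hF_def]
    linarith
  have hFcont : ∀ A B : ℝ, B < mg → ContinuousOn F (Set.Icc A B) := by
    intro A B hB
    have hd : 0 < mg - B := by linarith
    apply LipschitzOnWith.continuousOn
      (LipschitzOnWith.of_dist_le' (K := (1/2) * ((mg - B)^2)⁻¹ * (ρp - ρm)) ?_)
    intro x hx y hy
    have hxm : x < mg := lt_of_le_of_lt hx.2 hB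
    have hym : y < mg := lt_of_le_of_lt hy.2 hB
    have hsub := intervalIntegral.integral_sub (hint x hxm) (hint y hym)
    have hbound : ‖∫ r in ρm..ρp, ((E * chi r - x)⁻¹ - (E * chi r - y)⁻¹)‖
        ≤ (((mg - B)^2)⁻¹ * dist x y) * |ρp - ρm| := by
      apply intervalIntegral.norm_integral_le_of_norm_le_const
      intro z hz
      rw [Set.uIoc_of_le h1.le] at hz
      have hz' : z ∈ Set.Icc ρm ρp := Set.Ioc_subset_Icc_self hz
      have hux : mg - B ≤ E * chi z - x := by linarith [hmg z hz', hx.2]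
      have huy : mg - B ≤ E * chi z - y := by linarith [hmg z hz', hy.2]
      have hkey : (E * chi z - x)⁻¹ - (E * chi z - y)⁻¹
          = ((E * chi z - y) - (E * chi z - x)) / ((E * chi z - x) * (E * chi z - y)) :=
        inv_sub_inv (by nlinarith) (by nlinarith)
      have hnum : (E * chi z - y) - (E * chi z - x) = x - y := by ring
      rw [Real.norm_eq_abs, hkey, hnum, abs_div, Real.dist_eq]
      have hprod : (mg - B)^2 ≤ (E * chi z - x) * (E * chi z - y) := by nlinarith
      have habs : |(E * chi z - x) * (E * chi z - y)| = (E * chi z - x) * (E * chi z - y) := by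
        apply abs_of_pos; nlinarith
      rw [habs]
      have := div_le_div_of_nonneg_left (abs_nonneg (x - y)) (by positivity : (0:ℝ) < (mg - B)^2) hprod
      calc |x - y| / ((E * chi z - x) * (E * chi z - y)) ≤ |x - y| / (mg - B)^2 := this
        _ = ((mg - B)^2)⁻¹ * |x - y| := by rw [div_eq_mul_inv, mul_comm]
    rw [Real.dist_eq]
    simp only [hF_def]
    rw [← mul_sub, abs_mul]
    rw [hsub] at hbound
    rw [Real.norm_eq_abs] at hbound
    rw [abs_of_pos (by norm_num : (0:ℝ) < 1/2)]
    rw [abs_of_pos (by linarith : (0:ℝ) < ρp - ρm)] at hbound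
    rw [Real.dist_eq] at hbound ⊢
    nlinarith [abs_nonneg (x - y)]

  -- anchor point A with small value of F
  obtain ⟨A, hA_def⟩ : ∃ x : ℝ, x = min 0 (mg - (ρp - ρm)) := ⟨_, rfl⟩
  have hA0 : A ≤ 0 := by rw [hA_def]; exact min_le_left _ _
  have hAmg : A < mg := by
    rw [hA_def]
    exact lt_of_le_of_lt (min_le_right _ _) (by linarith)
  have hFA : F A ≤ 1/2 := by
    have hb := hFle A hAmg
    have hmA : ρp - ρm ≤ mg - A := by
      have : A ≤ mg - (ρp - ρm) := by rw [hA_def]; exact min_le_right _ _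
      linarith
    have hinv : (mg - A)⁻¹ ≤ (ρp - ρm)⁻¹ := inv_anti₀ (by linarith) hmA
    have hle1 : (ρp - ρm) * (mg - A)⁻¹ ≤ 1 := by
      calc (ρp - ρm) * (mg - A)⁻¹ ≤ (ρp - ρm) * (ρp - ρm)⁻¹ :=
            mul_le_mul_of_nonneg_left hinv (by linarith)
        _ = 1 := mul_inv_cancel₀ (by linarith)
    linarith
  have conclude : ∀ B : ℝ, B < mg → B ≤ 0 → 1 ≤ F B →
      ∃ J : ℝ, J < mg ∧ J ≤ 0 ∧ F J = 1 := by
    intro B hBmg hB0 hFB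
    rcases le_or_gt A B with hAB | hAB
    · obtain ⟨J, hJmem, hFJ⟩ := intermediate_value_Icc hAB (hFcont A B hBmg)
        ⟨by linarith, hFB⟩
      exact ⟨J, lt_of_le_of_lt hJmem.2 hBmg, le_trans hJmem.2 hB0, hFJ⟩
    · have := hmono B A hAB hAmg
      linarith
  have main : ∃ J : ℝ, J < mg ∧ J ≤ 0 ∧ F J = 1 := by
    rcases lt_trichotomy E 0 with hEneg | hEzero | hEpos
    · -- E < 0
      obtain ⟨c, hc_def⟩ : ∃ x : ℝ, x = -E := ⟨_, rfl⟩
      have hc : 0 < c := by rw [hc_def]; linarith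
      obtain ⟨δ, hδ_def⟩ : ∃ x : ℝ, x = (ρp - ρm)/2 := ⟨_, rfl⟩
      have hδ : 0 < δ := by rw [hδ_def]; linarith
      obtain ⟨A0, hA0_def⟩ : ∃ x : ℝ, x = c * δ * Real.exp (-(2*c)) := ⟨_, rfl⟩
      have hA0pos : 0 < A0 := by rw [hA0_def]; positivity
      have hmg_eq : mg = E * chi ts := by
        rw [hmg_def]
        apply le_antisymm (le_trans (min_le_right _ _) (min_le_right _ _))
        refine le_min ?_ (le_min ?_ le_rfl)
        · exact mul_le_mul_of_nonpos_left (hchi_ts ρm (Set.left_mem_Icc.2 h1.le)) hEneg.le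
        · exact mul_le_mul_of_nonpos_left (hchi_ts ρp (Set.right_mem_Icc.2 h1.le)) hEneg.le
      have hmgneg : mg < 0 := by
        rw [hmg_eq]
        exact mul_neg_of_neg_of_pos hEneg (hchi_pos ts hts_mem)
      obtain ⟨B, hB_def⟩ : ∃ x : ℝ, x = mg - A0 := ⟨_, rfl⟩
      have hBmg : B < mg := by rw [hB_def]; linarith
      have hB0 : B ≤ 0 := by rw [hB_def]; linarith
      refine conclude B hBmg hB0 ?_
      have key : ∃ s1 s2 : ℝ, ρm ≤ s1 ∧ s1 + δ = s2 ∧ s2 ≤ ρp ∧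
          c⁻¹ * (Real.log (A0 + c * δ) - Real.log A0) ≤ ∫ r in s1..s2, (E * chi r - B)⁻¹ := by
        rcases le_total ts ((ρm + ρp)/2) with hts_le | hts_ge
        · -- right interval [ts, ts+δ]
          refine ⟨ts, ts + δ, hts_mem.1, rfl, by rw [hδ_def]; linarith, ?_⟩
          have hintlow : IntervalIntegrable (fun r => (A0 + c * (r - ts))⁻¹) volume ts (ts + δ) := by
            apply ContinuousOn.intervalIntegrable
            apply ContinuousOn.inv₀
            · exact (continuous_const.add
                (continuous_const.mul (continuous_id.sub continuous_const))).continuousOn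
            · intro r hr
              rw [Set.uIcc_of_le (by linarith)] at hr
              nlinarith [hr.1]
          have hcomp : ∀ r ∈ Set.Icc ts (ts + δ), (A0 + c * (r - ts))⁻¹ ≤ (E * chi r - B)⁻¹ := by
            intro r hr
            have hrI : r ∈ Set.Icc ρm ρp :=
              ⟨le_trans hts_mem.1 hr.1, le_trans hr.2 (by rw [hδ_def]; linarith)⟩
            have hchi_lip : E * chi r - E * chi ts ≤ c * (r - ts) := by
              rw [hc_def]; unfold chi
              have k1 : E * (r - ts) ≤ 0 :=
                mul_nonpos_of_nonpos_of_nonneg hEneg.le (sub_nonneg.2 hr.1)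
              have k2 : E * (r - ts) * (2 - r - ts) ≤ 0 :=
                mul_nonpos_of_nonpos_of_nonneg k1 (by linarith [hrI.2, hts_mem.2, h2])
              nlinarith [k2]
            have hub : E * chi r - B ≤ A0 + c * (r - ts) := by
              rw [hB_def, hmg_eq]; linarith
            exact inv_anti₀ (hpos B hBmg r hrI) hub
          have hm := intervalIntegral.integral_mono_on (by linarith : ts ≤ ts + δ) hintlow
            ((hint B hBmg).mono_set (by
              rw [Set.uIcc_of_le (by linarith : ts ≤ ts + δ), Set.uIcc_of_le h1.le]
              exact Set.Icc_subset_Icc hts_mem.1 (by rw [hδ_def]; linarith))) hcomp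
          have hcalc : (∫ r in ts..(ts + δ), (A0 + c * (r - ts))⁻¹)
              = c⁻¹ * (Real.log (A0 + c * δ) - Real.log A0) := by
            have hre : (∫ r in ts..(ts + δ), (A0 + c * (r - ts))⁻¹)
                = ∫ t in (ts - ts)..(ts + δ - ts), (A0 + c * t)⁻¹ :=
              intervalIntegral.integral_comp_sub_right (fun t => (A0 + c * t)⁻¹) ts
            rw [hre, sub_self, add_sub_cancel_left]
            exact aux_log_int A0 c δ hA0pos hc hδ.le
          rw [← hcalc]
          exact hm
        · -- left interval [ts-δ, ts]
          have hs1m : ρm ≤ ts - δ := by rw [hδ_def]; linarith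
          refine ⟨ts - δ, ts, hs1m, by ring, hts_mem.2, ?_⟩
          have hintlow : IntervalIntegrable (fun r => (A0 + c * (ts - r))⁻¹) volume (ts - δ) ts := by
            apply ContinuousOn.intervalIntegrable
            apply ContinuousOn.inv₀
            · exact (continuous_const.add
                (continuous_const.mul (continuous_const.sub continuous_id))).continuousOn
            · intro r hr
              rw [Set.uIcc_of_le (by linarith)] at hr
              nlinarith [hr.2]
          have hcomp : ∀ r ∈ Set.Icc (ts - δ) ts, (A0 + c * (ts - r))⁻¹ ≤ (E * chi r - B)⁻¹ := by
            intro r hr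
            have hrI : r ∈ Set.Icc ρm ρp := ⟨le_trans hs1m hr.1, le_trans hr.2 hts_mem.2⟩
            have hchi_lip : E * chi r - E * chi ts ≤ c * (ts - r) := by
              rw [hc_def]; unfold chi
              have k1 : E * (ts - r) ≤ 0 :=
                mul_nonpos_of_nonpos_of_nonneg hEneg.le (sub_nonneg.2 hr.2)
              have k2 : E * (ts - r) * (r + ts) ≤ 0 :=
                mul_nonpos_of_nonpos_of_nonneg k1 (by linarith [hrI.1, hts_mem.1, h0])
              nlinarith [k2]
            have hub : E * chi r - B ≤ A0 + c * (ts - r) := by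
              rw [hB_def, hmg_eq]; linarith
            exact inv_anti₀ (hpos B hBmg r hrI) hub
          have hm := intervalIntegral.integral_mono_on (by linarith : ts - δ ≤ ts) hintlow
            ((hint B hBmg).mono_set (by
              rw [Set.uIcc_of_le (by linarith : ts - δ ≤ ts), Set.uIcc_of_le h1.le]
              exact Set.Icc_subset_Icc hs1m hts_mem.2)) hcomp
          have hcalc : (∫ r in (ts - δ)..ts, (A0 + c * (ts - r))⁻¹)
              = c⁻¹ * (Real.log (A0 + c * δ) - Real.log A0) := by
            have hre : (∫ r in (ts - δ)..ts, (A0 + c * (ts - r))⁻¹)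
                = ∫ t in (ts - ts)..(ts - (ts - δ)), (A0 + c * t)⁻¹ :=
              intervalIntegral.integral_comp_sub_left (fun t => (A0 + c * t)⁻¹) ts
            rw [hre, sub_self, sub_sub_cancel]
            exact aux_log_int A0 c δ hA0pos hc hδ.le
          rw [← hcalc]
          exact hm
      obtain ⟨s1, s2, hs1, hs12, hs2, hlow⟩ := key
      have hs12' : s1 < s2 := by rw [← hs12]; linarith
      have hsub1 : Set.uIcc ρm s1 ⊆ Set.uIcc ρm ρp := by
        rw [Set.uIcc_of_le (by linarith : ρm ≤ s1), Set.uIcc_of_le h1.le]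
        exact Set.Icc_subset_Icc le_rfl (by linarith)
      have hsub2 : Set.uIcc s1 s2 ⊆ Set.uIcc ρm ρp := by
        rw [Set.uIcc_of_le hs12'.le, Set.uIcc_of_le h1.le]
        exact Set.Icc_subset_Icc hs1 hs2
      have hsub3 : Set.uIcc s2 ρp ⊆ Set.uIcc ρm ρp := by
        rw [Set.uIcc_of_le hs2, Set.uIcc_of_le h1.le]
        exact Set.Icc_subset_Icc (by linarith) le_rfl
      have hsub23 : Set.uIcc s1 ρp ⊆ Set.uIcc ρm ρp := by
        rw [Set.uIcc_of_le (by linarith : s1 ≤ ρp), Set.uIcc_of_le h1.le]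
        exact Set.Icc_subset_Icc hs1 le_rfl
      have hi1 := (hint B hBmg).mono_set hsub1
      have hi2 := (hint B hBmg).mono_set hsub2
      have hi3 := (hint B hBmg).mono_set hsub3
      have hsplit : (∫ r in ρm..ρp, (E * chi r - B)⁻¹)
          = (∫ r in ρm..s1, (E * chi r - B)⁻¹) + ((∫ r in s1..s2, (E * chi r - B)⁻¹)
            + (∫ r in s2..ρp, (E * chi r - B)⁻¹)) := by
        rw [intervalIntegral.integral_add_adjacent_intervals hi2 hi3]
        rw [intervalIntegral.integral_add_adjacent_intervals hi1 ((hint B hBmg).mono_set hsub23)]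
      have hI1 : 0 ≤ ∫ r in ρm..s1, (E * chi r - B)⁻¹ := by
        apply intervalIntegral.integral_nonneg (by linarith : ρm ≤ s1)
        intro u hu
        exact inv_nonneg.2 (hpos B hBmg u ⟨hu.1, le_trans hu.2 (by linarith)⟩).le
      have hI3 : 0 ≤ ∫ r in s2..ρp, (E * chi r - B)⁻¹ := by
        apply intervalIntegral.integral_nonneg hs2
        intro u hu
        exact inv_nonneg.2 (hpos B hBmg u ⟨le_trans (by linarith) hu.1, hu.2⟩).le
      have hlog : 2 * c ≤ Real.log (A0 + c * δ) - Real.log A0 := by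
        have e1 : Real.log A0 = Real.log (c * δ) + (-(2*c)) := by
          rw [hA0_def, Real.log_mul (by positivity) (Real.exp_ne_zero _), Real.log_exp]
        have e2 : Real.log (c * δ) ≤ Real.log (A0 + c * δ) :=
          Real.log_le_log (by positivity) (by linarith)
        linarith
      have hmid : 2 ≤ ∫ r in s1..s2, (E * chi r - B)⁻¹ := by
        have h2c : c⁻¹ * (2 * c) = 2 := by field_simp
        have := mul_le_mul_of_nonneg_left hlog (inv_pos.2 hc).le
        linarith [hlow]
      simp only [hF_def]
      rw [hsplit]
      linarith
    · -- E = 0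
      have hmg0 : mg = 0 := by rw [hmg_def, hEzero]; simp
      refine conclude (-(ρp - ρm)/2) (by rw [hmg0]; linarith) (by linarith) ?_
      have hFeq : F (-(ρp - ρm)/2) = 1 := by
        simp only [hF_def, hEzero, zero_mul, zero_sub]
        rw [intervalIntegral.integral_const, smul_eq_mul]
        rw [show -(-(ρp - ρm)/2) = (ρp - ρm)/2 by ring]
        field_simp
        exact div_self (ne_of_gt (by linarith))
      linarith [hFeq]
    · -- E > 0
      have hmgpos : 0 < mg := by
        rw [hmg_def]
        refine lt_min (mul_pos hEpos (hchi_pos ρm (Set.left_mem_Icc.2 h1.le))) ?_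
        exact lt_min (mul_pos hEpos (hchi_pos ρp (Set.right_mem_Icc.2 h1.le)))
          (mul_pos hEpos (hchi_pos ts hts_mem))
      refine conclude 0 hmgpos le_rfl ?_
      have hF0 : F 0 = E0 / E := by
        simp only [hF_def, sub_zero]
        rw [aux_chi_int E ρm ρp hEpos h0 h1.le h2]
        have hφ : (Real.log ρp - Real.log (1 - ρp)) - (Real.log ρm - Real.log (1 - ρm))
            = 2 * E0 := by
          rw [hE0, hφp, hφm, Real.log_div (by linarith) (by linarith),
            Real.log_div (by linarith) (by linarith)]
          ring
        rw [hφ]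
        field_simp

      rw [hF0]
      exact (one_le_div hEpos).2 hE
  obtain ⟨J, hJmg, hJ0, hFJ⟩ := main
  have hFJraw : (1/2) * (∫ r in ρm..ρp, (E * chi r - J)⁻¹) = 1 := by
    rw [hF_def] at hFJ; exact hFJ
  refine ⟨J, ⟨hJ0, hFJraw⟩, fun r hr => hpos J hJmg r hr, ?_⟩
  intro J' hJ'0 hraw'
  have hFJ' : F J' = 1 := by rw [hF_def]; exact hraw'
  have hJ'mg : J' < mg := by
    by_contra hcon
    push_neg at hcon
    rcases lt_trichotomy E 0 with hEneg | hEzero | hEpos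
    · -- E < 0
      have hmg_eq : mg = E * chi ts := by
        rw [hmg_def]
        apply le_antisymm (le_trans (min_le_right _ _) (min_le_right _ _))
        refine le_min ?_ (le_min ?_ le_rfl)
        · exact mul_le_mul_of_nonpos_left (hchi_ts ρm (Set.left_mem_Icc.2 h1.le)) hEneg.le
        · exact mul_le_mul_of_nonpos_left (hchi_ts ρp (Set.right_mem_Icc.2 h1.le)) hEneg.le
      have hgts : E * chi ts - J' ≤ 0 := by rw [← hmg_eq]; linarith
      by_cases hbp : E * chi ρm - J' ≤ 0 ∧ E * chi ρp - J' ≤ 0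
      · -- integrand nonpositive everywhere, integral cannot be 2
        have hle : ∀ u ∈ Set.Icc ρm ρp, (E * chi u - J')⁻¹ ≤ 0 := by
          intro u hu
          apply inv_nonpos.2
          have k : 0 ≤ (-E) * ((u - ρm) * (ρp - u)) :=
            mul_nonneg (by linarith) (mul_nonneg (by linarith [hu.1]) (by linarith [hu.2]))
          obtain ⟨hbp1, hbp2⟩ := hbp
          unfold chi at hbp1 hbp2 ⊢
          have t1 : 0 ≤ (ρp - u) * (-(E * (ρm * (1 - ρm)) - J')) :=
            mul_nonneg (by linarith [hu.2]) (by linarith)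
          have t2 : 0 ≤ (u - ρm) * (-(E * (ρp * (1 - ρp)) - J')) :=
            mul_nonneg (by linarith [hu.1]) (by linarith)
          have t3 : 0 ≤ ((-E) * ((u - ρm) * (ρp - u))) * (ρp - ρm) :=
            mul_nonneg k (by linarith)
          nlinarith [t1, t2, t3, sub_pos.2 h1]
        have hneg : 0 ≤ ∫ r in ρm..ρp, -((E * chi r - J')⁻¹) :=
          intervalIntegral.integral_nonneg h1.le (fun u hu => by linarith [hle u hu])
        rw [intervalIntegral.integral_neg] at hneg
        rw [hF_def] at hFJ'
        simp only at hFJ'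
        linarith
      · -- a sign change: there is a root β of the denominator in [ρm, ρp]
        have hgcont : ContinuousOn (fun r => E * chi r - J') (Set.Icc ρm ρp) :=
          (hcont0.sub continuous_const).continuousOn
        have hroot : ∃ β ∈ Set.Icc ρm ρp, E * chi β - J' = 0 := by
          rcases not_and_or.1 hbp with hb | hb
          · push_neg at hb
            have hsub : Set.Icc ρm ts ⊆ Set.Icc ρm ρp := Set.Icc_subset_Icc le_rfl hts_mem.2
            obtain ⟨β, hβ, hβ0⟩ := intermediate_value_Icc' hts_mem.1 (hgcont.mono hsub)
              (Set.mem_Icc.2 ⟨hgts, hb.le⟩)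
            exact ⟨β, hsub hβ, hβ0⟩
          · push_neg at hb
            have hsub : Set.Icc ts ρp ⊆ Set.Icc ρm ρp := Set.Icc_subset_Icc hts_mem.1 le_rfl
            obtain ⟨β, hβ, hβ0⟩ := intermediate_value_Icc hts_mem.2 (hgcont.mono hsub)
              (Set.mem_Icc.2 ⟨hgts, hb.le⟩)
            exact ⟨β, hsub hβ, hβ0⟩
        obtain ⟨β, hβmem, hβ0⟩ := hroot
        have hII : IntervalIntegrable (fun r => (E * chi r - J')⁻¹) volume ρm ρp := by
          by_contra hni
          rw [hF_def] at hFJ'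
          simp only at hFJ'
          rw [intervalIntegral.integral_undef hni] at hFJ'
          norm_num at hFJ'
        have hfact : ∀ r : ℝ, E * chi r - J' = (E * (1 - r - β)) * (r - β) := by
          intro r
          have hb' : E * chi β - J' = 0 := hβ0
          unfold chi at hb' ⊢
          linear_combination hb'
        have hII2 : IntervalIntegrable (fun r => (r - β)⁻¹) volume ρm ρp := by
          have hbig : IntervalIntegrable (fun r => (-E) * (E * chi r - J')⁻¹) volume ρm ρp :=
            hII.const_mul _
          have hgm : AEStronglyMeasurable (fun r : ℝ => (r - β)⁻¹)
              (volume.restrict (Set.uIoc ρm ρp)) := by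
            apply Measurable.aestronglyMeasurable
            exact (measurable_id.sub_const β).inv
          apply hbig.mono_fun hgm
          have hne : ∀ᵐ r : ℝ ∂volume, r ≠ 1 - β := by
            have hset : {r : ℝ | ¬ r ≠ 1 - β} = {1 - β} := by ext x; simp
            rw [ae_iff, hset]
            exact measure_singleton _
          filter_upwards [ae_restrict_mem measurableSet_uIoc, ae_restrict_of_ae hne]
            with r hrI hrne
          rw [Set.uIoc_of_le h1.le] at hrI
          have hr0 : 0 < r := lt_trans h0 hrI.1
          have hr1 : r < 1 := lt_of_le_of_lt hrI.2 h2
          have hβl : 0 < β := lt_of_lt_of_le h0 hβmem.1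
          have hβu : β < 1 := lt_of_le_of_lt hβmem.2 h2
          rcases eq_or_ne r β with hrβ | hrβ
          · rw [hrβ]
            simp only [sub_self, inv_zero, norm_zero]
            exact norm_nonneg _

          · have h1rβ : (1:ℝ) - r - β ≠ 0 := fun h => hrne (by linarith)
            have hrβ' : r - β ≠ 0 := sub_ne_zero.2 hrβ
            have hEne : E ≠ 0 := ne_of_lt hEneg
            have e1 : (-E) * (E * chi r - J')⁻¹ = -((1 - r - β)⁻¹ * (r - β)⁻¹) := by
              rw [hfact r]
              field_simp [hEne, h1rβ, hrβ']
            rw [Real.norm_eq_abs, Real.norm_eq_abs, e1, abs_neg, abs_mul]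
            simp only [abs_inv]
            have hb1 : |1 - r - β| ≤ 1 := by
              rw [abs_le]; constructor <;> linarith
            have h2' : 1 ≤ |1 - r - β|⁻¹ :=
              (one_le_inv_iff₀).2 ⟨abs_pos.2 h1rβ, hb1⟩
            exact le_mul_of_one_le_left (inv_nonneg.2 (abs_nonneg _)) h2'
        rcases intervalIntegrable_sub_inv_iff.1 hII2 with h | h
        · exact absurd h (ne_of_lt h1)
        · exact h (by rw [Set.uIcc_of_le h1.le]; exact hβmem)
    · -- E = 0
      have hmg0 : mg = 0 := by rw [hmg_def, hEzero]; simp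
      have hJ'eq : J' = 0 := le_antisymm hJ'0 (by rw [hmg0] at hcon; exact hcon)
      rw [hF_def] at hFJ'
      simp only at hFJ'
      rw [hJ'eq, hEzero] at hFJ'
      simp at hFJ'
    · -- E > 0
      have hmgpos : 0 < mg := by
        rw [hmg_def]
        refine lt_min (mul_pos hEpos (hchi_pos ρm (Set.left_mem_Icc.2 h1.le))) ?_
        exact lt_min (mul_pos hEpos (hchi_pos ρp (Set.right_mem_Icc.2 h1.le)))
          (mul_pos hEpos (hchi_pos ts hts_mem))
      linarith
  rcases lt_trichotomy J' J with hlt | heq | hgt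
  · have := hmono J' J hlt hJmg
    rw [hFJ, hFJ'] at this
    linarith
  · exact heq
  · have := hmono J J' hgt hJ'mg
    rw [hFJ, hFJ'] at this
    linarith
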